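/- Let V* be the fixed point of a weighted Bellman operator T_w(f) = L f + b, where L = ∑_{k=1}^K w_k γ^k P^k is a bounded linear operator on L²(μ) with ‖L‖_{op} ≤ γ̄ < 1, and let θ* = Π_H T_w(θ*) be the projected fixed point onto a closed subspace H. With V⊥* := V* − Π_H V*, the Bellman residual satisfies T_w(θ*) − θ* = S(V⊥*) where S := (Π⊥ (I − L)^{−1} Π⊥)^{−1} on H⊥; consequently ‖T_w(θ*) − θ*‖_μ ≤ 2 ‖V⊥*‖_μ. -/

import Mathlib

open scoped RealInnerProductSpace


/-- Pythagoras for the orthogonal projection. -/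
lemma stmt19_pyth {E : Type*} [NormedAddCommGroup E] [InnerProductSpace ℝ E] [CompleteSpace E]
    (H : Submodule ℝ E) [CompleteSpace H] (z : E) :
    ‖z‖ ^ 2 = ‖(H.orthogonalProjectionOnto z : E)‖ ^ 2
      + ‖z - (H.orthogonalProjectionOnto z : E)‖ ^ 2 := by
  have hmem : z - (H.orthogonalProjectionOnto z : E) ∈ Hᗮ :=
    H.sub_starProjection_mem_orthogonal z
  have hinner : (inner ℝ ((H.orthogonalProjectionOnto z : E))
      (z - (H.orthogonalProjectionOnto z : E)) : ℝ) = 0 :=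
    hmem (H.orthogonalProjectionOnto z : E) (SetLike.coe_mem _)
  have h := norm_add_sq_real ((H.orthogonalProjectionOnto z : E))
      (z - (H.orthogonalProjectionOnto z : E))
  rw [show (H.orthogonalProjectionOnto z : E) + (z - (H.orthogonalProjectionOnto z : E)) = z from by
    abel] at h
  rw [h, hinner]; ring

set_option maxHeartbeats 1000000 in
/-- for a weighted Bellman operator `T f = L f + b` with `‖L‖ ≤ γ̄ < 1`,
fixed point `V` and projected fixed point `θ = Π_H (L θ + b)`, the Bellman residual
satisfies `T θ - θ = S (V - Π_H V)` where `S = (Π⊥ (I-L)⁻¹ Π⊥)⁻¹` on `H⊥`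
(expressed here as `Π⊥ (I-L)⁻¹ Π⊥ (Tθ - θ) = V - Π_H V`), and consequently
`‖T θ - θ‖ ≤ 2 ‖V - Π_H V‖`. -/
theorem stmt19 {E : Type*} [NormedAddCommGroup E] [InnerProductSpace ℝ E] [CompleteSpace E]
    (H : Submodule ℝ E) [CompleteSpace H]
    (L : E →L[ℝ] E) (b : E) (γbar : ℝ) (hL : ‖L‖ ≤ γbar) (h0 : 0 ≤ γbar) (h1 : γbar < 1)
    (A : E →L[ℝ] E) (hA1 : (1 - L) * A = 1) (hA2 : A * (1 - L) = 1)
    (V θ : E) (hV : L V + b = V)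
    (hθ : (H.orthogonalProjectionOnto (L θ + b) : E) = θ) :
    ((1 - H.subtypeL.comp (H.orthogonalProjectionOnto))
        (A ((1 - H.subtypeL.comp (H.orthogonalProjectionOnto)) (L θ + b - θ))))
      = V - (H.orthogonalProjectionOnto V : E)
    ∧ ‖L θ + b - θ‖ ≤ 2 * ‖V - (H.orthogonalProjectionOnto V : E)‖ := by
  set Q : E →L[ℝ] E := H.subtypeL.comp (H.orthogonalProjectionOnto) with hQ
  have hQapp : ∀ z : E, Q z = (H.orthogonalProjectionOnto z : E) := fun z => rfl
  -- θ ∈ H and Q θ = θ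
  have hθH : θ ∈ H := by rw [← hθ]; exact SetLike.coe_mem _
  have hQθ : Q θ = θ := by rw [hQapp, ← Submodule.starProjection_apply, Submodule.starProjection_eq_self_iff.mpr hθH]
  -- the residual r
  set r : E := L θ + b - θ with hr
  have hQr : Q r = 0 := by
    rw [hr, map_sub, hQθ, hQapp, hθ, sub_self]
  -- x := V - θ satisfies (1 - L) x = r
  set x : E := V - θ with hxdef
  have hb : b = V - L V := eq_sub_iff_add_eq.mpr (by rw [add_comm]; exact hV)
  have hBx : x - L x = r := by
    rw [hr, hxdef, map_sub, hb]; abel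
  have hAr : A r = x := by
    have h := congrArg (fun f : E →L[ℝ] E => f x) hA2
    simp only [ContinuousLinearMap.mul_apply, ContinuousLinearMap.one_apply] at h
    have h2 : (1 - L) x = r := by
      simpa [ContinuousLinearMap.sub_apply, ContinuousLinearMap.one_apply] using hBx
    rw [← h2, h]
  -- Q x and the orthogonal part u
  have hQx : Q x = Q V - θ := by rw [hxdef, map_sub, hQθ]
  have hu : x - Q x = V - Q V := by rw [hxdef, hQx]; abel
  -- Part 1
  have part1 : (1 - Q) (A ((1 - Q) r)) = V - (H.orthogonalProjectionOnto V : E) := by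
    have h1r : (1 - Q) r = r := by
      simp [ContinuousLinearMap.sub_apply, ContinuousLinearMap.one_apply, hQr]
    rw [h1r, hAr]
    simpa [ContinuousLinearMap.sub_apply, ContinuousLinearMap.one_apply, hQapp] using hu
  refine ⟨part1, ?_⟩
  -- Part 2: norm bound
  -- From Q r = 0 : Q (L x) = Q x
  have hQLx : Q (L x) = Q x := by
    have h : Q (x - L x) = 0 := by rw [hBx]; exact hQr
    rw [map_sub] at h
    exact (sub_eq_zero.mp h).symm
  -- rewrite r = u - w with u = x - Q x, w = L x - Q (L x)
  have hrw : r = (x - Q x) - (L x - Q x) := by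
    rw [← hBx]; abel
  have hpyth_x : ‖x‖ ^ 2 = ‖Q x‖ ^ 2 + ‖x - Q x‖ ^ 2 := stmt19_pyth H x
  have hpyth_Lx : ‖L x‖ ^ 2 = ‖Q x‖ ^ 2 + ‖L x - Q x‖ ^ 2 := by
    have h := stmt19_pyth H (L x)
    rwa [show ((H.orthogonalProjectionOnto (L x) : E)) = Q x from hQLx] at h
  have hLx : ‖L x‖ ≤ γbar * ‖x‖ :=
    le_trans (L.le_opNorm x) (mul_le_mul_of_nonneg_right hL (norm_nonneg x))
  -- ‖w‖² ≤ γ̄² ‖u‖²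
  have hw_sq : ‖L x - Q x‖ ^ 2 ≤ (γbar * ‖x - Q x‖) ^ 2 := by
    have h2 : ‖L x‖ ^ 2 ≤ γbar ^ 2 * ‖x‖ ^ 2 := by
      nlinarith [norm_nonneg (L x), hLx, mul_le_mul hLx hLx (norm_nonneg (L x)) (by positivity)]
    have hx2 : γbar ^ 2 * ‖x‖ ^ 2 = γbar ^ 2 * (‖Q x‖ ^ 2 + ‖x - Q x‖ ^ 2) := by
      rw [hpyth_x]
    have hpos : 0 ≤ (1 - γbar) * (1 + γbar) * ‖Q x‖ ^ 2 := by
      have : (0:ℝ) ≤ 1 - γbar := by linarith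
      have h2' : (0:ℝ) ≤ 1 + γbar := by linarith
      positivity
    nlinarith []
  have hw : ‖L x - Q x‖ ≤ γbar * ‖x - Q x‖ :=
    le_of_pow_le_pow_left₀ two_ne_zero (by positivity) hw_sq
  have hfinal : ‖r‖ ≤ 2 * ‖x - Q x‖ := by
    calc ‖r‖ = ‖(x - Q x) - (L x - Q x)‖ := by rw [← hrw]
      _ ≤ ‖x - Q x‖ + ‖L x - Q x‖ := norm_sub_le _ _
      _ ≤ ‖x - Q x‖ + γbar * ‖x - Q x‖ := by linarith
      _ ≤ 2 * ‖x - Q x‖ := by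
          have h3 : γbar * ‖x - Q x‖ ≤ 1 * ‖x - Q x‖ :=
            mul_le_mul_of_nonneg_right h1.le (norm_nonneg _)
          linarith
  rw [hu] at hfinal
  simpa [hQapp] using hfinal
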